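/- The geodesic distance on the real projective plane is not a kernel of negative type: there exist six points x₁,…,x₆ in RP² and real numbers t₁,…,t₆ with ∑tᵢ = 0 such that ∑ᵢⱼ tᵢtⱼ d(xᵢ,xⱼ) > 0. -/

import Mathlib

open Real

/-- Geodesic distance on `RP²` in terms of nonzero representative vectors in `ℝ³`:
`d(x,y) = arccos(|(x,y)| / (‖x‖‖y‖))`. -/
noncomputable def rp2Dist (x y : EuclideanSpace ℝ (Fin 3)) : ℝ :=
  Real.arccos (|inner ℝ x y| / (‖x‖ * ‖y‖))

def rpM : Fin 6 → Fin 3 → ℝ :=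
  ![![1,0,1], ![1,0,0], ![1,0,-1], ![0,1,1], ![0,1,0], ![0,1,-1]]

def rpT : Fin 6 → ℝ := ![-1,1,-1,1,-1,1]
lemma rpT0 : rpT 0 = (-1:ℝ) := rfl
lemma rpM00 : rpM 0 0 = (1:ℝ) := rfl
lemma rpM01 : rpM 0 1 = (0:ℝ) := rfl
lemma rpM02 : rpM 0 2 = (1:ℝ) := rfl
lemma rpT1 : rpT 1 = (1:ℝ) := rfl
lemma rpM10 : rpM 1 0 = (1:ℝ) := rfl
lemma rpM11 : rpM 1 1 = (0:ℝ) := rfl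
lemma rpM12 : rpM 1 2 = (0:ℝ) := rfl
lemma rpT2 : rpT 2 = (-1:ℝ) := rfl
lemma rpM20 : rpM 2 0 = (1:ℝ) := rfl
lemma rpM21 : rpM 2 1 = (0:ℝ) := rfl
lemma rpM22 : rpM 2 2 = (-1:ℝ) := rfl
lemma rpT3 : rpT 3 = (1:ℝ) := rfl
lemma rpM30 : rpM 3 0 = (0:ℝ) := rfl
lemma rpM31 : rpM 3 1 = (1:ℝ) := rfl
lemma rpM32 : rpM 3 2 = (1:ℝ) := rfl
lemma rpT4 : rpT 4 = (-1:ℝ) := rfl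
lemma rpM40 : rpM 4 0 = (0:ℝ) := rfl
lemma rpM41 : rpM 4 1 = (1:ℝ) := rfl
lemma rpM42 : rpM 4 2 = (0:ℝ) := rfl
lemma rpT5 : rpT 5 = (1:ℝ) := rfl
lemma rpM50 : rpM 5 0 = (0:ℝ) := rfl
lemma rpM51 : rpM 5 1 = (1:ℝ) := rfl
lemma rpM52 : rpM 5 2 = (-1:ℝ) := rfl

lemma rp2d (u v : Fin 3 → ℝ) :
    rp2Dist ((WithLp.equiv 2 (Fin 3 → ℝ)).symm u) ((WithLp.equiv 2 (Fin 3 → ℝ)).symm v) =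
    Real.arccos (|u 0 * v 0 + u 1 * v 1 + u 2 * v 2| /
      (Real.sqrt (u 0 ^ 2 + u 1 ^ 2 + u 2 ^ 2) * Real.sqrt (v 0 ^ 2 + v 1 ^ 2 + v 2 ^ 2))) := by
  simp [rp2Dist, PiLp.inner_apply, EuclideanSpace.norm_eq, Fin.sum_univ_three, mul_comm]

lemma arccos_half : Real.arccos (1/2) = π/3 := by
  rw [show (1/2 : ℝ) = Real.cos (π/3) from (Real.cos_pi_div_three).symm,
    Real.arccos_cos (by positivity) (by linarith [pi_pos])]

lemma arccos_inv_sqrt2 : Real.arccos (Real.sqrt 2)⁻¹ = π/4 := by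
  have h2 : Real.sqrt 2 * Real.sqrt 2 = 2 := Real.mul_self_sqrt (by norm_num)
  have : (Real.sqrt 2)⁻¹ = Real.sqrt 2 / 2 := by
    rw [eq_div_iff (by norm_num), inv_mul_eq_div, div_eq_iff (by positivity), h2]
  rw [this, show (Real.sqrt 2/2 : ℝ) = Real.cos (π/4) from (Real.cos_pi_div_four).symm,
    Real.arccos_cos (by positivity) (by linarith [pi_pos])]

/-- The geodesic distance on the real projective plane is not a kernel of negative
type: there are six points and reals `tᵢ` with `∑ tᵢ = 0` but
`∑ᵢⱼ tᵢ tⱼ d(xᵢ,xⱼ) > 0`. -/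
theorem rp2_dist_not_negative_type :
    ∃ (x : Fin 6 → EuclideanSpace ℝ (Fin 3)) (t : Fin 6 → ℝ),
      (∀ i, x i ≠ 0) ∧ (∑ i, t i) = 0 ∧
      0 < ∑ i, ∑ j, t i * t j * rp2Dist (x i) (x j) := by
  refine ⟨fun i => (WithLp.equiv 2 (Fin 3 → ℝ)).symm (rpM i), rpT, ?_, ?_, ?_⟩
  · intro i h
    have h0 := congrArg (fun z => WithLp.equiv 2 (Fin 3 → ℝ) z 0) h
    have h1 := congrArg (fun z => WithLp.equiv 2 (Fin 3 → ℝ) z 1) h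
    fin_cases i <;> first | exact one_ne_zero h0 | exact one_ne_zero h1
  · simp only [Fin.sum_univ_six, rpT0,rpT1,rpT2,rpT3,rpT4,rpT5]; norm_num
  · simp only [Fin.sum_univ_six, rp2d, rpT0,rpT1,rpT2,rpT3,rpT4,rpT5,
      rpM00,rpM01,rpM02,rpM10,rpM11,rpM12,rpM20,rpM21,rpM22,rpM30,rpM31,rpM32,
      rpM40,rpM41,rpM42,rpM50,rpM51,rpM52]
    norm_num [Real.mul_self_sqrt, Real.arccos_one, Real.arccos_zero, arccos_half, arccos_inv_sqrt2]
    ring_nf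
    positivity
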